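/- For every integer n ≥ 7 there is a unique α₀ ∈ (0,1) such that F_n(α₀) = 0. Moreover F_n(α) < 0 for all α ∈ (0, α₀) and F_n(α) > 0 for all α ∈ (α₀, 1). -/

import Mathlib

open Real Set

set_option maxHeartbeats 1000000 in
/-- For `n ≥ 7` the function `F_n(α) = (1+α)/(1-α) - (n+1)^α` has a unique zero `α₀`
in `(0,1)`, is negative on `(0,α₀)` and positive on `(α₀,1)`. -/
theorem stmt2 (n : ℕ) (hn : 7 ≤ n) :
    ∃ α₀ ∈ Set.Ioo (0 : ℝ) 1,
      (1 + α₀) / (1 - α₀) - ((n : ℝ) + 1) ^ α₀ = 0 ∧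
      (∀ α ∈ Set.Ioo (0 : ℝ) 1, (1 + α) / (1 - α) - ((n : ℝ) + 1) ^ α = 0 → α = α₀) ∧
      (∀ α ∈ Set.Ioo (0 : ℝ) α₀, (1 + α) / (1 - α) - ((n : ℝ) + 1) ^ α < 0) ∧
      (∀ α ∈ Set.Ioo α₀ (1 : ℝ), 0 < (1 + α) / (1 - α) - ((n : ℝ) + 1) ^ α) := by
  set m : ℝ := (n : ℝ) + 1 with hm
  have hm8 : (8:ℝ) ≤ m := by
    have : (7:ℝ) ≤ (n:ℝ) := by exact_mod_cast hn
    simp [hm]; linarith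
  have hmpos : (0:ℝ) < m := by linarith
  set L : ℝ := Real.log m with hL
  have hL8 : Real.log 8 ≤ L := Real.log_le_log (by norm_num) hm8
  have h2L : 2 < L := by
    have h8 : Real.exp 2 < 8 := by
      have h := Real.exp_one_lt_d9
      have h2 : Real.exp 2 = Real.exp 1 * Real.exp 1 := by
        rw [← Real.exp_add]; norm_num
      nlinarith [Real.exp_pos 1]
    have := (Real.lt_log_iff_exp_lt (by norm_num : (0:ℝ) < 8)).2 h8
    linarith
  set g : ℝ → ℝ := fun α => Real.log (1 + α) - Real.log (1 - α) - α * L with hg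
  -- derivative of g on Ioo (-1) 1
  have hderiv : ∀ x ∈ Ioo (-1:ℝ) 1, HasDerivAt g ((1+x)⁻¹ + (1-x)⁻¹ - L) x := by
    intro x hx
    obtain ⟨hx1, hx2⟩ := hx
    have h1 : (1:ℝ) + x ≠ 0 := by intro h; linarith [h]
    have h2 : (1:ℝ) - x ≠ 0 := by intro h; linarith [h]
    have d1 : HasDerivAt (fun y : ℝ => Real.log (1 + y)) (1/(1+x)) x := by
      simpa using (((hasDerivAt_id x).const_add 1).log (by simpa using h1))
    have d2 : HasDerivAt (fun y : ℝ => Real.log (1 - y)) ((-1)/(1-x)) x := by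
      simpa using (((hasDerivAt_id x).const_sub 1).log (by simpa using h2))
    have d3 : HasDerivAt (fun y : ℝ => y * L) L x := hasDerivAt_mul_const L
    have := (d1.sub d2).sub d3
    have heq : 1/(1+x) - (-1)/(1-x) - L = (1+x)⁻¹ + (1-x)⁻¹ - L := by
      field_simp
      ring
    rw [heq] at this
    exact this
  set g1 : ℝ → ℝ := fun x => (1+x)⁻¹ + (1-x)⁻¹ - L with hg1
  have hderiv1 : ∀ x ∈ Ioo (-1:ℝ) 1,
      HasDerivAt g1 (-((1+x)^2)⁻¹ + ((1-x)^2)⁻¹) x := by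
    intro x hx
    obtain ⟨hx1, hx2⟩ := hx
    have h1 : (1:ℝ) + x ≠ 0 := by intro h; linarith [h]
    have h2 : (1:ℝ) - x ≠ 0 := by intro h; linarith [h]
    have d1 : HasDerivAt (fun y : ℝ => (1+y)⁻¹) (-1/(1+x)^2) x := by
      simpa [Pi.inv_def] using (((hasDerivAt_id x).const_add 1).inv (by simpa using h1))
    have d2 : HasDerivAt (fun y : ℝ => (1-y)⁻¹) (-(-1)/(1-x)^2) x := by
      simpa [Pi.inv_def] using (((hasDerivAt_id x).const_sub 1).inv (by simpa using h2))
    have := (d1.add d2).sub_const L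
    have heq : -1/(1+x)^2 + -(-1)/(1-x)^2 = -((1+x)^2)⁻¹ + ((1-x)^2)⁻¹ := by
      field_simp
    rw [heq] at this
    exact this
  have hsub : Ico (0:ℝ) 1 ⊆ Ioo (-1:ℝ) 1 := fun x hx => ⟨by linarith [hx.1], hx.2⟩
  have hconv : StrictConvexOn ℝ (Ico (0:ℝ) 1) g := by
    apply strictConvexOn_of_deriv2_pos (convex_Ico 0 1)
    · intro x hx
      exact ((hderiv x (hsub hx)).continuousAt).continuousWithinAt
    · intro x hx
      rw [interior_Ico] at hx
      have hx1 : x ∈ Ioo (-1:ℝ) 1 := ⟨by linarith [hx.1], hx.2⟩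
      have e1 : deriv g =ᶠ[nhds x] g1 := by
        filter_upwards [Ioo_mem_nhds hx1.1 hx1.2] with y hy
        exact (hderiv y hy).deriv
      have : (deriv^[2] g) x = deriv (deriv g) x := by
        simp [Function.iterate_succ, Function.iterate_one]
      rw [this, Filter.EventuallyEq.deriv_eq e1, (hderiv1 x hx1).deriv]
      have hlt : (1-x)^2 < (1+x)^2 := by nlinarith [hx.1, hx.2]
      have hxx : (0:ℝ) < 1 - x := by linarith [hx.2]
      have hp : (0:ℝ) < (1-x)^2 := by positivity
      have := one_div_lt_one_div_of_lt hp hlt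
      rw [one_div, one_div] at this
      linarith
  have hg0 : g 0 = 0 := by simp [hg]
  -- g (1/10) < 0
  have hgβ : g (1/10 : ℝ) < 0 := by
    have h1 : Real.log (1 + (1/10:ℝ)) - Real.log (1 - (1/10:ℝ)) = Real.log (11/9) := by
      rw [← Real.log_div (by norm_num) (by norm_num)]
      norm_num
    have h2 : ((11:ℝ)/9)^(10:ℕ) < 8 := by norm_num
    have h3 : Real.log (((11:ℝ)/9)^(10:ℕ)) < Real.log 8 := Real.log_lt_log (by positivity) h2
    rw [Real.log_pow] at h3
    push_cast at h3
    show Real.log (1 + (1/10:ℝ)) - Real.log (1 - (1/10:ℝ)) - (1/10) * L < 0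
    rw [h1]
    nlinarith [hL8]
  -- γ
  set γ : ℝ := 1 - (m^2)⁻¹ with hγdef
  have hm2 : (64:ℝ) ≤ m^2 := by nlinarith
  have hinvpos : (0:ℝ) < (m^2)⁻¹ := by positivity
  have hinvle : (m^2)⁻¹ ≤ (64:ℝ)⁻¹ := inv_anti₀ (by norm_num) hm2
  have hγ1 : γ < 1 := by rw [hγdef]; linarith
  have hγβ : (1/10:ℝ) < γ := by
    rw [hγdef]; norm_num at hinvle ⊢; linarith
  have hgγ : 0 < g γ := by
    have hγpos : (0:ℝ) < γ := by rw [hγdef]; norm_num at hinvle ⊢; linarith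
    have h1γ : (1:ℝ) < 1 + γ := by linarith
    have hlog1 : 0 < Real.log (1 + γ) := Real.log_pos h1γ
    have h1mγ : 1 - γ = (m^2)⁻¹ := by simp [hγdef]
    have hlog2 : Real.log (1 - γ) = -(2*L) := by
      rw [h1mγ, Real.log_inv, Real.log_pow]
      push_cast; ring
    show 0 < Real.log (1 + γ) - Real.log (1 - γ) - γ * L
    rw [hlog2]
    nlinarith [h2L]
  -- IVT
  have hcont : ContinuousOn g (Icc (1/10:ℝ) γ) := by
    intro x hx
    have : x ∈ Ioo (-1:ℝ) 1 := ⟨by linarith [hx.1], by linarith [hx.2, hγ1]⟩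
    exact ((hderiv x this).continuousAt).continuousWithinAt
  obtain ⟨α₀, hα₀mem, hα₀⟩ :=
    intermediate_value_Ioo (le_of_lt hγβ) hcont ⟨hgβ, hgγ⟩
  have hα₀0 : (0:ℝ) < α₀ := by linarith [hα₀mem.1]
  have hα₀1 : α₀ < 1 := by linarith [hα₀mem.2, hγ1]
  have hβα₀ : (1/10:ℝ) < α₀ := hα₀mem.1
  have hα₀Ico : α₀ ∈ Ico (0:ℝ) 1 := ⟨le_of_lt hα₀0, hα₀1⟩
  -- relate g to F
  have hFg : ∀ α ∈ Ioo (0:ℝ) 1,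
      (1 + α) / (1 - α) - m ^ α
        = Real.exp (Real.log (1+α) - Real.log (1-α)) - Real.exp (α * L) := by
    intro α hα
    obtain ⟨hα1, hα2⟩ := hα
    have h1 : (0:ℝ) < 1 + α := by linarith
    have h2 : (0:ℝ) < 1 - α := by linarith
    have e1 : (1 + α) / (1 - α) = Real.exp (Real.log (1+α) - Real.log (1-α)) := by
      rw [← Real.log_div (ne_of_gt h1) (ne_of_gt h2), Real.exp_log (div_pos h1 h2)]
    have e2 : m ^ α = Real.exp (α * L) := by
      rw [Real.rpow_def_of_pos hmpos, mul_comm]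
    rw [e1, e2]
  have key : ∀ α ∈ Ioo (0:ℝ) 1,
      ((1 + α) / (1 - α) - m ^ α < 0 ↔ g α < 0)
      ∧ ((1 + α) / (1 - α) - m ^ α = 0 ↔ g α = 0)
      ∧ (0 < (1 + α) / (1 - α) - m ^ α ↔ 0 < g α) := by
    intro α hα
    rw [hFg α hα]
    have hgα : g α = (Real.log (1+α) - Real.log (1-α)) - α * L := rfl
    constructor
    · rw [sub_neg, Real.exp_lt_exp, hgα, sub_neg]
    constructor
    · rw [sub_eq_zero, Real.exp_eq_exp, hgα, sub_eq_zero]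
    · rw [sub_pos, Real.exp_lt_exp, hgα, sub_pos]
  clear_value g
  -- sign of g on (0, α₀)
  have hneg : ∀ α ∈ Ioo (0:ℝ) α₀, g α < 0 := by
    intro α hα
    obtain ⟨hα1, hα2⟩ := hα
    have h0s : (0:ℝ) ∈ Ico (0:ℝ) 1 := ⟨le_refl 0, by norm_num⟩
    have ht1 : 0 < 1 - α/α₀ := by
      have : α/α₀ < 1 := (div_lt_one hα₀0).2 hα2
      linarith
    have ht2 : 0 < α/α₀ := div_pos hα1 hα₀0
    have hcomb : (1 - α/α₀) • (0:ℝ) + (α/α₀) • α₀ = α := by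
      simp [smul_eq_mul]
      field_simp
    have := hconv.2 h0s hα₀Ico (by intro h; exact absurd h (ne_of_lt hα₀0)) ht1 ht2 (by ring)
    rw [hcomb] at this
    simp only [smul_eq_mul, hg0, hα₀, mul_zero, add_zero] at this
    exact this
  -- sign of g on (α₀, 1)
  have hpos : ∀ α ∈ Ioo α₀ (1:ℝ), 0 < g α := by
    intro α hα
    obtain ⟨hα1, hα2⟩ := hα
    have hβs : (1/10:ℝ) ∈ Ico (0:ℝ) 1 := ⟨by norm_num, by norm_num⟩
    have hαs : α ∈ Ico (0:ℝ) 1 := ⟨by linarith, hα2⟩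
    have hd : 0 < α - 1/10 := by linarith
    set t : ℝ := (α - α₀)/(α - 1/10) with htdef
    have ht1 : 0 < t := div_pos (by linarith) hd
    have ht2 : 0 < 1 - t := by
      have : t < 1 := (div_lt_one hd).2 (by linarith)
      linarith
    have hne : α - 1/10 ≠ 0 := ne_of_gt hd
    have ht : t * (α - 1/10) = α - α₀ := div_mul_cancel₀ _ hne
    have hcomb : t • (1/10:ℝ) + (1-t) • α = α₀ := by
      simp only [smul_eq_mul]
      linear_combination (-1 : ℝ) * ht
    have := hconv.2 hβs hαs (by intro h; linarith [h]) ht1 ht2 (by ring)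
    rw [hcomb] at this
    simp only [smul_eq_mul, hα₀] at this
    have h1 : t * g (1/10) < 0 := mul_neg_of_pos_of_neg ht1 hgβ
    by_contra hcon
    push_neg at hcon
    have h2 : (1-t) * g α ≤ 0 := mul_nonpos_of_nonneg_of_nonpos (le_of_lt ht2) hcon
    clear_value t
    have h3 : t * g (1/10) + (1 - t) * g α < 0 := by linarith
    exact absurd this (not_lt.2 (le_of_lt h3))
  refine ⟨α₀, ⟨hα₀0, hα₀1⟩, ?_, ?_, ?_, ?_⟩
  · exact ((key α₀ ⟨hα₀0, hα₀1⟩).2.1).2 hα₀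
  · intro α hα hF
    have hgα : g α = 0 := ((key α hα).2.1).1 hF
    by_contra hne
    rcases lt_or_gt_of_ne hne with h | h
    · have := hneg α ⟨hα.1, h⟩; linarith
    · have := hpos α ⟨h, hα.2⟩; linarith
  · intro α hα
    have hα01 : α ∈ Ioo (0:ℝ) 1 := ⟨hα.1, lt_trans hα.2 hα₀1⟩
    exact ((key α hα01).1).2 (hneg α hα)
  · intro α hα
    have hα01 : α ∈ Ioo (0:ℝ) 1 := ⟨lt_trans hα₀0 hα.1, hα.2⟩
    exact ((key α hα01).2.2).2 (hpos α hα)
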